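/- For integers n ≥ 3 define s_n = (∑_{k=1}^{n−2} 1/k) + 13/(12(n−1)) + 5/(12n) − ln n. Then lim_{n→∞} n⁴·(s_n − s_{n+1}) = 1/4. -/

import Mathlib

open Filter Topology

noncomputable def s (n : ℕ) : ℝ :=
  (∑ k ∈ Finset.Icc 1 (n - 2), (1 : ℝ) / k) + 13 / (12 * ((n : ℝ) - 1)) + 5 / (12 * n)
    - Real.log n

lemma s_diff (n : ℕ) (hn : 3 ≤ n) :
    s n - s (n + 1) = 1 / (12 * ((n : ℝ) - 1)) - 2 / (3 * n) - 5 / (12 * ((n : ℝ) + 1))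
      + (Real.log ((n : ℝ) + 1) - Real.log n) := by
  have hN : (3 : ℝ) ≤ (n : ℝ) := by exact_mod_cast hn
  have h1 : n + 1 - 2 = (n - 2) + 1 := by omega
  have h2 : ((n - 2 : ℕ) + 1 : ℕ) = n - 1 := by omega
  have hsum : (∑ k ∈ Finset.Icc 1 ((n + 1) - 2), (1 : ℝ) / k)
      = (∑ k ∈ Finset.Icc 1 (n - 2), (1 : ℝ) / k) + 1 / ((n : ℝ) - 1) := by
    rw [h1, Finset.sum_Icc_succ_top (by omega)]
    congr 1
    rw [h2]
    have : ((n - 1 : ℕ) : ℝ) = (n : ℝ) - 1 := by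
      have := Nat.cast_sub (show 1 ≤ n by omega) (R := ℝ); push_cast at this ⊢; linarith
    rw [this]
  unfold s
  rw [hsum]
  push_cast
  simp only [add_sub_cancel_right]
  have hne1 : (n : ℝ) - 1 ≠ 0 := by linarith
  have hne2 : (n : ℝ) ≠ 0 := by linarith
  have hne3 : (n : ℝ) + 1 ≠ 0 := by linarith
  field_simp
  ring

set_option maxHeartbeats 1000000 in
lemma key (n : ℕ) (hn : 3 ≤ n) :
    |(n : ℝ) ^ 4 * (s n - s (n + 1)) - 1 / 4| ≤ 3 / (n : ℝ) := by
  have hN : (3 : ℝ) ≤ (n : ℝ) := by exact_mod_cast hn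
  have hne1 : (n : ℝ) - 1 ≠ 0 := by linarith
  have hne2 : (n : ℝ) ≠ 0 := by linarith
  have hne3 : (n : ℝ) + 1 ≠ 0 := by linarith
  set N : ℝ := (n : ℝ) with hNdef
  -- log estimate via Taylor series of log(1-x) with x = -1/N
  have hx : |(-1 / N : ℝ)| < 1 := by
    rw [abs_div, abs_neg, abs_one, abs_of_pos (by linarith : (0:ℝ) < N)]
    rw [div_lt_one (by linarith)]; linarith
  have hlog := Real.abs_log_sub_add_sum_range_le hx 4
  have hsum4 : (∑ i ∈ Finset.range 4, (-1 / N) ^ (i + 1) / (i + 1))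
      = -1 / N + 1 / (2 * N ^ 2) - 1 / (3 * N ^ 3) + 1 / (4 * N ^ 4) := by
    simp [Finset.sum_range_succ]
    field_simp
    ring
  have h1mx : (1 : ℝ) - (-1 / N) = (N + 1) / N := by field_simp; ring
  rw [hsum4, h1mx] at hlog
  have habs : |(-1 / N : ℝ)| = 1 / N := by
    rw [abs_div, abs_neg, abs_one, abs_of_pos (by linarith : (0:ℝ) < N)]
  rw [habs] at hlog
  have hlogdiv : Real.log ((N + 1) / N) = Real.log (N + 1) - Real.log N :=
    Real.log_div hne3 hne2
  rw [hlogdiv] at hlog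
  -- set E := the error
  set E : ℝ := (-1 / N + 1 / (2 * N ^ 2) - 1 / (3 * N ^ 3) + 1 / (4 * N ^ 4))
      + (Real.log (N + 1) - Real.log N) with hE
  -- bound on the RHS: (1/N)^5 / (1 - 1/N) = 1/(N^4 (N-1))
  have hrhs : (1 / N) ^ 5 / (1 - 1 / N) = 1 / (N ^ 4 * (N - 1)) := by
    field_simp
  rw [hrhs] at hlog
  -- main algebraic identity
  have hmain : N ^ 4 * (s n - s (n + 1)) - 1 / 4
      = (6 - 4 * N) / (12 * (N ^ 2 - 1)) + N ^ 4 * E := by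
    rw [s_diff n hn, ← hNdef]
    have hne4 : N ^ 2 - 1 ≠ 0 := by nlinarith
    rw [hE]
    field_simp
    ring
  rw [hmain]
  have hb1 : |(6 - 4 * N) / (12 * (N ^ 2 - 1))| ≤ 1 / N := by
    rw [abs_div, abs_of_pos (by nlinarith : (0:ℝ) < 12 * (N ^ 2 - 1)),
      div_le_div_iff₀ (by nlinarith) (by linarith)]
    rw [abs_of_nonpos (by linarith : 6 - 4 * N ≤ 0)]
    nlinarith
  have hb2 : |N ^ 4 * E| ≤ 2 / N := by
    rw [abs_mul, abs_of_nonneg (by positivity : (0:ℝ) ≤ N ^ 4)]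
    have : N ^ 4 * |E| ≤ N ^ 4 * (1 / (N ^ 4 * (N - 1))) := by
      apply mul_le_mul_of_nonneg_left hlog (by positivity)
    have h2 : N ^ 4 * (1 / (N ^ 4 * (N - 1))) = 1 / (N - 1) := by
      field_simp
    rw [h2] at this
    have h3 : 1 / (N - 1) ≤ 2 / N := by
      rw [div_le_div_iff₀ (by linarith) (by linarith)]; linarith
    linarith
  calc |(6 - 4 * N) / (12 * (N ^ 2 - 1)) + N ^ 4 * E|
      ≤ |(6 - 4 * N) / (12 * (N ^ 2 - 1))| + |N ^ 4 * E| := abs_add_le _ _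
    _ ≤ 1 / N + 2 / N := by linarith
    _ = 3 / N := by ring

theorem diff_rate_four :
    Tendsto (fun n : ℕ => (n : ℝ) ^ 4 * (s n - s (n + 1))) atTop (𝓝 (1 / 4)) := by
  have h0 : Tendsto (fun n : ℕ => (n : ℝ) ^ 4 * (s n - s (n + 1)) - 1 / 4) atTop (𝓝 0) := by
    refine squeeze_zero_norm' ?_ (tendsto_const_div_atTop_nhds_zero_nat 3)
    filter_upwards [eventually_ge_atTop 3] with n hn
    exact key n hn
  have := h0.add_const (1 / 4 : ℝ)
  simpa using this
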